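/- Let A be a finite group and G a normal Hall subgroup of A (i.e., |G| is coprime to the index [A:G]). Let D be a complement to G in A (a subgroup with A = GD and G ∩ D = 1), let H = N_A(D) be the normalizer of D in A, and let X = A/H be the coset space with A acting by left multiplication. Then (A,G,X) is exceptional: whenever the A-orbit of a pair (x,y) ∈ X × X coincides with its G-orbit, then x = y. -/

import Mathlib

open Pointwise

/-- If every element of `A` factors as an element of `G` times an element of `D`, then any
subgroup `P` of `N_A(D)` whose order is coprime to `|G|` is contained in `D`. -/
theorem aux_le_of_coprime {A : Type*} [Group A] [Fintype A]
    (G : Subgroup A) (D : Subgroup A)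
    (hA : ∀ a : A, ∃ g ∈ G, ∃ d ∈ D, a = g * d)
    (P : Subgroup A) (hP : P ≤ Subgroup.normalizer (D : Set A))
    (hcop : Nat.Coprime (Nat.card P) (Nat.card G)) : P ≤ D := by
  set N := Subgroup.normalizer (D : Set A) with hN
  -- the composite (G ⊓ N) → N → N ⧸ D is surjective
  let φ : ↥(G ⊓ N) →* N ⧸ D.subgroupOf N :=
    (QuotientGroup.mk' (D.subgroupOf N)).comp (Subgroup.inclusion inf_le_right)
  have hφ : Function.Surjective φ := by
    intro q
    obtain ⟨n, rfl⟩ := QuotientGroup.mk'_surjective (D.subgroupOf N) q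
    obtain ⟨g, hg, d, hd, hn⟩ := hA (n : A)
    have hdN : d ∈ N := D.le_normalizer hd
    have hgN : g ∈ N := by
      have : g = (n : A) * d⁻¹ := by rw [hn]; group
      rw [this]; exact mul_mem n.2 (inv_mem hdN)
    refine ⟨⟨g, hg, hgN⟩, ?_⟩
    show QuotientGroup.mk (Subgroup.inclusion inf_le_right ⟨g, hg, hgN⟩) = QuotientGroup.mk n
    rw [QuotientGroup.eq]
    show ((⟨g, hgN⟩ : N)⁻¹ * n : A) ∈ D
    have : ((⟨g, hgN⟩ : N)⁻¹ * n : A) = g⁻¹ * n := rfl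
    rw [this, hn]
    simpa using hd
  have hdvd1 : Nat.card (N ⧸ D.subgroupOf N) ∣ Nat.card ↥(G ⊓ N) :=
    Subgroup.card_dvd_of_surjective φ hφ
  have hdvd2 : Nat.card ↥(G ⊓ N) ∣ Nat.card G := Subgroup.card_dvd_of_le inf_le_left
  intro p hp
  set n : N := ⟨p, hP hp⟩ with hn
  have hp1 : p ^ Nat.card P = 1 := by
    have h := pow_card_eq_one' (x := (⟨p, hp⟩ : P))
    have h2 : ((⟨p, hp⟩ : P) : A) ^ Nat.card P = ((1 : P) : A) := by
      rw [← SubmonoidClass.coe_pow, h]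
    simpa using h2
  have hq1 : (QuotientGroup.mk' (D.subgroupOf N) n) ^ Nat.card P = 1 := by
    rw [← map_pow]
    have : n ^ Nat.card P = 1 := by ext; simpa using hp1
    rw [this, map_one]
  have h2 : orderOf (QuotientGroup.mk' (D.subgroupOf N) n) ∣ Nat.card P :=
    orderOf_dvd_of_pow_eq_one hq1
  have h3 : orderOf (QuotientGroup.mk' (D.subgroupOf N) n) ∣ Nat.card G :=
    (orderOf_dvd_natCard _).trans (hdvd1.trans hdvd2)
  have h4 : orderOf (QuotientGroup.mk' (D.subgroupOf N) n) = 1 :=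
    Nat.eq_one_of_dvd_coprimes hcop h2 h3
  have h5 : QuotientGroup.mk' (D.subgroupOf N) n = 1 := orderOf_eq_one_iff.mp h4
  have : n ∈ D.subgroupOf N := by
    rwa [← QuotientGroup.ker_mk' (D.subgroupOf N), MonoidHom.mem_ker]
  exact this

/-- Let `A` be a finite group with a normal Hall subgroup `G`, let `D` be a complement
to `G` in `A`, let `H = N_A(D)` and `X = A/H`.  Then `(A,G,X)` is exceptional: whenever
the `A`-orbit of a pair `(x,y) ∈ X × X` coincides with its `G`-orbit, `x = y`. -/
theorem hall_complement_exceptional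
    (A : Type*) [Group A] [Fintype A]
    (G : Subgroup A) [G.Normal] (hHall : Nat.Coprime (Nat.card G) G.index)
    (D : Subgroup A) (hGD : G ⊓ D = ⊥)
    (hA : ∀ a : A, ∃ g ∈ G, ∃ d ∈ D, a = g * d) :
    ∀ x y : A ⧸ Subgroup.normalizer (D : Set A),
      MulAction.orbit A ((x, y) : (A ⧸ Subgroup.normalizer (D : Set A)) × (A ⧸ Subgroup.normalizer (D : Set A))) =
        MulAction.orbit G ((x, y) : (A ⧸ Subgroup.normalizer (D : Set A)) × (A ⧸ Subgroup.normalizer (D : Set A))) →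
      x = y := by
  intro x y horb
  obtain ⟨a, rfl⟩ := QuotientGroup.mk_surjective x
  obtain ⟨b, rfl⟩ := QuotientGroup.mk_surjective y
  set H := Subgroup.normalizer (D : Set A) with hHdef
  set xa : A ⧸ H := QuotientGroup.mk a with hxa
  set xb : A ⧸ H := QuotientGroup.mk b with hxb
  set S := MulAction.stabilizer A ((xa, xb) : (A ⧸ H) × (A ⧸ H)) with hSdef
  -- every element of A is (elt of G) * (elt of S)
  have hGS : ∀ c : A, ∃ g ∈ G, ∃ s ∈ S, c = g * s := by
    intro c
    have h1 : c • ((xa, xb) : (A ⧸ H) × (A ⧸ H)) ∈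
        MulAction.orbit A ((xa, xb) : (A ⧸ H) × (A ⧸ H)) := MulAction.mem_orbit _ c
    rw [horb] at h1
    obtain ⟨g, hg⟩ := h1
    refine ⟨(g : A), g.2, (g : A)⁻¹ * c, ?_, by group⟩
    show ((g : A)⁻¹ * c) • ((xa, xb) : (A ⧸ H) × (A ⧸ H)) = (xa, xb)
    have hg' : (g : A) • ((xa, xb) : (A ⧸ H) × (A ⧸ H)) = c • (xa, xb) := hg
    rw [mul_smul, ← hg', inv_smul_smul]
  -- index of G.subgroupOf S is G.index
  haveI : (G.subgroupOf S).Normal := Subgroup.Normal.subgroupOf ‹G.Normal› S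
  let φ : ↥S →* A ⧸ G := (QuotientGroup.mk' G).comp S.subtype
  have hφsurj : Function.Surjective φ := by
    intro q
    obtain ⟨c, rfl⟩ := QuotientGroup.mk'_surjective G q
    obtain ⟨g, hg, s, hs, rfl⟩ := hGS c
    refine ⟨⟨s, hs⟩, ?_⟩
    show QuotientGroup.mk s = QuotientGroup.mk (g * s)
    rw [QuotientGroup.eq]
    have : s⁻¹ * (g * s) = s⁻¹ * g * s := by group
    rw [this]
    exact Subgroup.Normal.conj_mem' ‹G.Normal› g hg s
  have hker : φ.ker = G.subgroupOf S := by
    ext u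
    simp [φ, MonoidHom.mem_ker, Subgroup.mem_subgroupOf, QuotientGroup.eq_one_iff]
  have hidx : (G.subgroupOf S).index = G.index := by
    rw [Subgroup.index_eq_card, Subgroup.index_eq_card, ← hker]
    exact Nat.card_congr (QuotientGroup.quotientKerEquivOfSurjective φ hφsurj).toEquiv
  have hcardK : Nat.card (G.subgroupOf S) ∣ Nat.card G := by
    have e := Subgroup.equivMapOfInjective (G.subgroupOf S) S.subtype S.subtype_injective
    rw [Nat.card_congr e.toEquiv, Subgroup.subgroupOf_map_subtype]
    exact Subgroup.card_dvd_of_le inf_le_left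
  have hcop' : Nat.Coprime (Nat.card (G.subgroupOf S)) (G.subgroupOf S).index :=
    Nat.Coprime.coprime_dvd_left hcardK (hidx ▸ hHall)
  obtain ⟨E', hE'⟩ := Subgroup.exists_right_complement'_of_coprime hcop'
  set E := E'.map S.subtype with hEdef
  have hcardE : Nat.card E = G.index := by
    have e := Subgroup.equivMapOfInjective E' S.subtype S.subtype_injective
    rw [← hidx, hE'.symm.index_eq_card]
    exact (Nat.card_congr e.toEquiv).symm
  have hES : E ≤ S := Subgroup.map_subtype_le E'
  -- |D| = G.index
  have hcompGD : Subgroup.IsComplement' G D := by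
    apply Subgroup.isComplement'_of_disjoint_and_mul_eq_univ (disjoint_iff.mpr hGD)
    ext c
    simp only [Set.mem_univ, iff_true, Set.mem_mul]
    obtain ⟨g, hg, d, hd, rfl⟩ := hA c
    exact ⟨g, hg, d, hd, rfl⟩
  have hcardD : Nat.card D = G.index := (hcompGD.symm.index_eq_card).symm
  -- conjugates of E equal D
  have hPle : ∀ c : A, (∀ e ∈ E, e • (QuotientGroup.mk c : A ⧸ H) = QuotientGroup.mk c) →
      (MulAut.conj c)⁻¹ • E = D := by
    intro c hc
    have hle : (MulAut.conj c)⁻¹ • E ≤ H := by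
      intro p hp
      rw [Subgroup.mem_pointwise_smul_iff_inv_smul_mem, inv_inv] at hp
      have hp' : c * p * c⁻¹ ∈ E := by
        simpa [MulAut.smul_def, MulAut.conj_apply] using hp
      have h1 := hc _ hp'
      rw [MulAction.Quotient.smul_mk, QuotientGroup.eq] at h1
      have h2 : ((c * p * c⁻¹) • c)⁻¹ * c = p⁻¹ := by
        simp only [smul_eq_mul]; group
      rw [h2] at h1
      exact inv_mem_iff.mp h1
    have hcard : Nat.card ((MulAut.conj c)⁻¹ • E : Subgroup A) = Nat.card D := by
      rw [hcardD, ← hcardE]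
      exact (Nat.card_congr (Subgroup.equivSMul _ E).toEquiv).symm
    have hled : (MulAut.conj c)⁻¹ • E ≤ D :=
      aux_le_of_coprime G D hA _ hle (by rw [hcard, hcardD]; exact hHall.symm)
    exact Subgroup.eq_of_le_of_card_ge hled (le_of_eq hcard.symm)
  have hfix : ∀ e ∈ E, e • xa = xa ∧ e • xb = xb := by
    intro e he
    have h := MulAction.mem_stabilizer_iff.mp (hES he)
    rw [Prod.smul_mk] at h
    exact ⟨congrArg Prod.fst h, congrArg Prod.snd h⟩
  have hEa : (MulAut.conj a)⁻¹ • E = D := hPle a (fun e he => (hfix e he).1)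
  have hEb : (MulAut.conj b)⁻¹ • E = D := hPle b (fun e he => (hfix e he).2)
  have hEa' : MulAut.conj a • D = E := by rw [← hEa, smul_inv_smul]
  have h2 : MulAut.conj (b⁻¹ * a) • D = D := by
    calc MulAut.conj (b⁻¹ * a) • D = (MulAut.conj b)⁻¹ • (MulAut.conj a • D) := by
          rw [map_mul, map_inv, mul_smul]
      _ = D := by rw [hEa', hEb]
  have hmem : b⁻¹ * a ∈ Subgroup.normalizer (D : Set A) := by
    rw [Subgroup.mem_normalizer_iff]
    intro g
    constructor
    · intro hg
      have h3 := Subgroup.smul_mem_pointwise_smul g (MulAut.conj (b⁻¹ * a)) D hg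
      rw [h2] at h3
      simpa [MulAut.smul_def, MulAut.conj_apply, mul_assoc] using h3
    · intro hg
      have h3 : MulAut.conj (b⁻¹ * a) • g ∈ MulAut.conj (b⁻¹ * a) • D := by
        rw [h2]; simpa [MulAut.smul_def, MulAut.conj_apply, mul_assoc] using hg
      exact (Subgroup.smul_mem_pointwise_smul_iff).mp h3
  show xa = xb
  rw [hxa, hxb, QuotientGroup.eq]
  have h4 : a⁻¹ * b = (b⁻¹ * a)⁻¹ := by group
  rw [h4]
  exact inv_mem hmem
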